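/- (Hyperbolicity of the Ten-Moment system in the x-direction.) Let u ∈ U_ad and let A ∈ M₆(ℝ) be the Jacobian matrix at u of the x-flux map f written in conserved variables (the matrix of the Fréchet derivative of f at u with respect to the standard basis). Then the characteristic polynomial of A equals (X − v₁)²·(X − v₁ − √(3p₁₁/ρ))·(X − v₁ + √(3p₁₁/ρ))·(X − v₁ − √(p₁₁/ρ))·(X − v₁ + √(p₁₁/ρ)). In particular, A has six real eigenvalues: v₁ (with multiplicity two), v₁ ± √(3p₁₁/ρ), and v₁ ± √(p₁₁/ρ). -/

import Mathlib

noncomputable section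

/-- Density of a Ten-Moment state. -/
def rho (u : Fin 6 → ℝ) : ℝ := u 0

/-- First velocity component. -/
def v1 (u : Fin 6 → ℝ) : ℝ := u 1 / u 0

/-- Second velocity component. -/
def v2 (u : Fin 6 → ℝ) : ℝ := u 2 / u 0

/-- Pressure component `p₁₁`. -/
def p11 (u : Fin 6 → ℝ) : ℝ := 2 * u 3 - (u 1) ^ 2 / u 0

/-- Pressure component `p₁₂`. -/
def p12 (u : Fin 6 → ℝ) : ℝ := 2 * u 4 - u 1 * u 2 / u 0

/-- Pressure component `p₂₂`. -/
def p22 (u : Fin 6 → ℝ) : ℝ := 2 * u 5 - (u 2) ^ 2 / u 0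

/-- The admissible set: positive density and positive definite pressure tensor. -/
def Uad : Set (Fin 6 → ℝ) :=
  {u | 0 < rho u ∧ 0 < p11 u ∧ 0 < p11 u * p22 u - (p12 u) ^ 2}

/-- The x-flux map written in conserved variables. -/
def fluxC (u : Fin 6 → ℝ) : Fin 6 → ℝ :=
  ![u 1,
    (u 1) ^ 2 / u 0 + p11 u,
    u 1 * u 2 / u 0 + p12 u,
    (u 3 + p11 u) * u 1 / u 0,
    u 4 * u 1 / u 0 + (p11 u * u 2 + p12 u * u 1) / (2 * u 0),
    u 5 * u 1 / u 0 + p12 u * u 2 / u 0]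

def Jmat (u : Fin 6 → ℝ) : Matrix (Fin 6) (Fin 6) ℝ :=
  ![![0, 1, 0, 0, 0, 0],
    ![0, 0, 0, 2, 0, 0],
    ![0, 0, 0, 0, 2, 0],
    ![2 * (u 1)^3 / (u 0)^3 - 3 * u 3 * u 1 / (u 0)^2,
      3 * u 3 / u 0 - 3 * (u 1)^2 / (u 0)^2, 0, 3 * u 1 / u 0, 0, 0],
    ![2 * (u 1)^2 * u 2 / (u 0)^3 - 2 * u 4 * u 1 / (u 0)^2 - u 3 * u 2 / (u 0)^2,
      2 * u 4 / u 0 - 2 * u 1 * u 2 / (u 0)^2, u 3 / u 0 - (u 1)^2 / (u 0)^2,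
      u 2 / u 0, 2 * u 1 / u 0, 0],
    ![2 * u 1 * (u 2)^2 / (u 0)^3 - u 5 * u 1 / (u 0)^2 - 2 * u 4 * u 2 / (u 0)^2,
      u 5 / u 0 - (u 2)^2 / (u 0)^2, 2 * u 4 / u 0 - 2 * u 1 * u 2 / (u 0)^2,
      0, 2 * u 2 / u 0, u 1 / u 0]]

section VecEval
variable {α : Type*} (a0 a1 a2 a3 a4 a5 : α)
lemma vec6_0 : ![a0,a1,a2,a3,a4,a5] 0 = a0 := rfl
lemma vec6_1 : ![a0,a1,a2,a3,a4,a5] 1 = a1 := rfl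
lemma vec6_2 : ![a0,a1,a2,a3,a4,a5] 2 = a2 := rfl
lemma vec6_3 : ![a0,a1,a2,a3,a4,a5] 3 = a3 := rfl
lemma vec6_4 : ![a0,a1,a2,a3,a4,a5] 4 = a4 := rfl
lemma vec6_5 : ![a0,a1,a2,a3,a4,a5] 5 = a5 := rfl
end VecEval

set_option maxHeartbeats 1000000 in
open ContinuousLinearMap in
lemma hasFDeriv_flux (u : Fin 6 → ℝ) (h0 : u 0 ≠ 0) :
    HasFDerivAt fluxC (LinearMap.toContinuousLinearMap (Jmat u).mulVecLin) u := by
  have hc : ∀ (j : Fin 6), HasFDerivAt (fun v : Fin 6 → ℝ => v j)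
      (ContinuousLinearMap.proj j : (Fin 6 → ℝ) →L[ℝ] ℝ) u := fun j =>
    (ContinuousLinearMap.proj (R := ℝ) (φ := fun _ : Fin 6 => ℝ) j).hasFDerivAt
  have hinv : HasFDerivAt (fun v : Fin 6 → ℝ => (v 0)⁻¹)
      ((ContinuousLinearMap.smulRight (1 : ℝ →L[ℝ] ℝ) (-((u 0) ^ 2)⁻¹)).comp
        (ContinuousLinearMap.proj 0)) u := (hasFDerivAt_inv h0).comp u (hc 0)
  rw [hasFDerivAt_pi']
  intro i
  fin_cases i
  · refine HasFDerivAt.congr_fderiv (hc 1) ?_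
    ext v
    simp only [ContinuousLinearMap.comp_apply, LinearMap.coe_toContinuousLinearMap', Matrix.mulVecLin_apply]
    simp only [Fin.reduceFinMk, Fin.isValue, Jmat, ContinuousLinearMap.comp_apply, ContinuousLinearMap.proj_apply,
      LinearMap.coe_toContinuousLinearMap', Matrix.mulVecLin_apply, Matrix.mulVec,
      dotProduct, Fin.sum_univ_six, vec6_0, vec6_1, vec6_2, vec6_3, vec6_4, vec6_5]
    ring
  · refine HasFDerivAt.congr_of_eventuallyEq (HasFDerivAt.congr_fderiv ((hc 3).const_mul 2) ?_)
      (Filter.Eventually.of_forall fun x => ?_)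
    · ext v
      simp only [ContinuousLinearMap.comp_apply, LinearMap.coe_toContinuousLinearMap', Matrix.mulVecLin_apply]
      simp only [Fin.reduceFinMk, Fin.isValue, Jmat, ContinuousLinearMap.comp_apply, ContinuousLinearMap.proj_apply,
        ContinuousLinearMap.coe_smul', Pi.smul_apply, smul_eq_mul,
        LinearMap.coe_toContinuousLinearMap', Matrix.mulVecLin_apply, Matrix.mulVec,
        dotProduct, Fin.sum_univ_six, vec6_0, vec6_1, vec6_2, vec6_3, vec6_4, vec6_5]
      ring
    · show fluxC x _ = _
      simp only [Fin.reduceFinMk, Fin.isValue, fluxC, p11, vec6_1]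
      ring
  · refine HasFDerivAt.congr_of_eventuallyEq (HasFDerivAt.congr_fderiv ((hc 4).const_mul 2) ?_)
      (Filter.Eventually.of_forall fun x => ?_)
    · ext v
      simp only [ContinuousLinearMap.comp_apply, LinearMap.coe_toContinuousLinearMap', Matrix.mulVecLin_apply]
      simp only [Fin.reduceFinMk, Fin.isValue, Jmat, ContinuousLinearMap.comp_apply, ContinuousLinearMap.proj_apply,
        ContinuousLinearMap.coe_smul', Pi.smul_apply, smul_eq_mul,
        LinearMap.coe_toContinuousLinearMap', Matrix.mulVecLin_apply, Matrix.mulVec,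
        dotProduct, Fin.sum_univ_six, vec6_0, vec6_1, vec6_2, vec6_3, vec6_4, vec6_5]
      ring
    · show fluxC x _ = _
      simp only [Fin.reduceFinMk, Fin.isValue, fluxC, p12, vec6_2]
      ring
  · have hd := (((hc 3).add (((hc 3).const_mul 2).sub (((hc 1).mul (hc 1)).mul hinv))).mul
        (hc 1)).mul hinv
    refine HasFDerivAt.congr_of_eventuallyEq (HasFDerivAt.congr_fderiv hd ?_)
      (Filter.Eventually.of_forall fun x => ?_)
    · ext v
      simp only [ContinuousLinearMap.comp_apply, LinearMap.coe_toContinuousLinearMap', Matrix.mulVecLin_apply]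
      simp only [Fin.reduceFinMk, Fin.isValue, Jmat, ContinuousLinearMap.comp_apply, ContinuousLinearMap.proj_apply,
        ContinuousLinearMap.add_apply, ContinuousLinearMap.sub_apply,
        ContinuousLinearMap.coe_smul', Pi.smul_apply, smul_eq_mul,
        ContinuousLinearMap.smulRight_apply, ContinuousLinearMap.one_apply,
        LinearMap.coe_toContinuousLinearMap', Matrix.mulVecLin_apply, Matrix.mulVec,
        dotProduct, Fin.sum_univ_six, vec6_0, vec6_1, vec6_2, vec6_3, vec6_4, vec6_5,
        Pi.mul_apply, Pi.add_apply, Pi.sub_apply, Pi.pow_apply]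
      field_simp
      ring
    · show fluxC x _ = _
      simp only [Fin.reduceFinMk, Fin.isValue, fluxC, p11, vec6_3, div_eq_mul_inv, Pi.mul_apply, Pi.add_apply, Pi.sub_apply, Pi.pow_apply, Pi.smul_apply, smul_eq_mul]
      ring
  · have hq11 := ((hc 3).const_mul 2).sub (((hc 1).mul (hc 1)).mul hinv)
    have hq12 := ((hc 4).const_mul 2).sub (((hc 1).mul (hc 2)).mul hinv)
    have hd := (((hc 4).mul (hc 1)).mul hinv).add
      (((((hq11.mul (hc 2)).add (hq12.mul (hc 1)))).mul hinv).const_mul 2⁻¹)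
    refine HasFDerivAt.congr_of_eventuallyEq (HasFDerivAt.congr_fderiv hd ?_)
      (Filter.Eventually.of_forall fun x => ?_)
    · ext v
      simp only [ContinuousLinearMap.comp_apply, LinearMap.coe_toContinuousLinearMap', Matrix.mulVecLin_apply]
      simp only [Fin.reduceFinMk, Fin.isValue, Jmat, ContinuousLinearMap.comp_apply, ContinuousLinearMap.proj_apply,
        ContinuousLinearMap.add_apply, ContinuousLinearMap.sub_apply,
        ContinuousLinearMap.coe_smul', Pi.smul_apply, smul_eq_mul,
        ContinuousLinearMap.smulRight_apply, ContinuousLinearMap.one_apply,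
        LinearMap.coe_toContinuousLinearMap', Matrix.mulVecLin_apply, Matrix.mulVec,
        dotProduct, Fin.sum_univ_six, vec6_0, vec6_1, vec6_2, vec6_3, vec6_4, vec6_5,
        Pi.mul_apply, Pi.add_apply, Pi.sub_apply, Pi.pow_apply]
      field_simp
      ring
    · show fluxC x _ = _
      simp only [Fin.reduceFinMk, Fin.isValue, fluxC, p11, p12, vec6_4, div_eq_mul_inv, mul_inv, Pi.mul_apply, Pi.add_apply, Pi.sub_apply, Pi.pow_apply, Pi.smul_apply, smul_eq_mul]
      ring
  · have hq12 := ((hc 4).const_mul 2).sub (((hc 1).mul (hc 2)).mul hinv)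
    have hd := (((hc 5).mul (hc 1)).mul hinv).add ((hq12.mul (hc 2)).mul hinv)
    refine HasFDerivAt.congr_of_eventuallyEq (HasFDerivAt.congr_fderiv hd ?_)
      (Filter.Eventually.of_forall fun x => ?_)
    · ext v
      simp only [ContinuousLinearMap.comp_apply, LinearMap.coe_toContinuousLinearMap', Matrix.mulVecLin_apply]
      simp only [Fin.reduceFinMk, Fin.isValue, Jmat, ContinuousLinearMap.comp_apply, ContinuousLinearMap.proj_apply,
        ContinuousLinearMap.add_apply, ContinuousLinearMap.sub_apply,
        ContinuousLinearMap.coe_smul', Pi.smul_apply, smul_eq_mul,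
        ContinuousLinearMap.smulRight_apply, ContinuousLinearMap.one_apply,
        LinearMap.coe_toContinuousLinearMap', Matrix.mulVecLin_apply, Matrix.mulVec,
        dotProduct, Fin.sum_univ_six, vec6_0, vec6_1, vec6_2, vec6_3, vec6_4, vec6_5,
        Pi.mul_apply, Pi.add_apply, Pi.sub_apply, Pi.pow_apply]
      field_simp
      ring
    · show fluxC x _ = _
      simp only [Fin.reduceFinMk, Fin.isValue, fluxC, p12, vec6_5, div_eq_mul_inv, Pi.mul_apply, Pi.add_apply, Pi.sub_apply, Pi.pow_apply, Pi.smul_apply, smul_eq_mul]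



set_option maxRecDepth 100000 in
set_option maxHeartbeats 1000000 in
lemma det6 (x g30 g31 g33 g40 g41 g42 g43 g44 g50 g51 g52 g54 g55 : ℝ) :
    Matrix.det !![x, -1, 0, 0, 0, 0;
                  0, x, 0, -2, 0, 0;
                  0, 0, x, 0, -2, 0;
                  g30, g31, 0, g33, 0, 0;
                  g40, g41, g42, g43, g44, 0;
                  g50, g51, g52, 0, g54, g55] =
      g55 * (2 * g42 + g44 * x) * (g33 * x ^ 2 + 2 * g31 * x + 2 * g30) := by
  simp only [Matrix.det_succ_row_zero, Fin.sum_univ_succ, Fin.zero_succAbove,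
    Fin.succ_succAbove_zero, Fin.succ_succAbove_succ, Matrix.submatrix_apply,
    Matrix.cons_val_zero, Matrix.cons_val_succ, Matrix.of_apply, Finset.univ_unique,
    Matrix.det_unique, Fin.default_eq_zero, Finset.sum_singleton, Fin.val_zero, Fin.val_succ,
    pow_succ, pow_zero, one_mul, mul_one, neg_mul, mul_neg, neg_neg, zero_mul, mul_zero,
    add_zero, zero_add, neg_zero]
  ring

set_option maxHeartbeats 2000000 in
set_option maxRecDepth 100000 in
open Polynomial in
/-- Hyperbolicity of the Ten-Moment system in the x-direction: the
characteristic polynomial of the flux Jacobian at an admissible state factors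
into linear factors with the real roots `v₁` (twice), `v₁ ± √(3p₁₁/ρ)` and
`v₁ ± √(p₁₁/ρ)`. -/
theorem fluxJacobian_charpoly (u : Fin 6 → ℝ) (hu : u ∈ Uad)
    (A : Matrix (Fin 6) (Fin 6) ℝ)
    (hA : HasFDerivAt fluxC (LinearMap.toContinuousLinearMap A.mulVecLin) u) :
    A.charpoly =
      (X - C (v1 u)) ^ 2 *
      (X - C (v1 u + Real.sqrt (3 * p11 u / rho u))) *
      (X - C (v1 u - Real.sqrt (3 * p11 u / rho u))) *
      (X - C (v1 u + Real.sqrt (p11 u / rho u))) *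
      (X - C (v1 u - Real.sqrt (p11 u / rho u))) := by
  obtain ⟨hr, hp, -⟩ := hu
  have hρ : (0:ℝ) < u 0 := hr
  have h0 : u 0 ≠ 0 := ne_of_gt hρ
  have hAJ : A = Jmat u := by
    have h1 : LinearMap.toContinuousLinearMap A.mulVecLin
        = LinearMap.toContinuousLinearMap (Jmat u).mulVecLin :=
      hA.unique (hasFDeriv_flux u h0)
    have h2 : A.mulVecLin = (Jmat u).mulVecLin := by
      have h2' := congrArg
        (fun (L : (Fin 6 → ℝ) →L[ℝ] (Fin 6 → ℝ)) => (L : (Fin 6 → ℝ) →ₗ[ℝ] (Fin 6 → ℝ))) h1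
      simpa using h2'
    ext i j
    have h3 := congrFun (LinearMap.congr_fun h2 (Pi.single j 1)) i
    simpa [Matrix.mulVecLin_apply, Matrix.mulVec_single] using h3
  subst hAJ
  apply Polynomial.funext
  intro x
  have hdet : ((Jmat u).charpoly).eval x = (x • (1 : Matrix (Fin 6) (Fin 6) ℝ) - Jmat u).det := by
    rw [Matrix.charpoly, show ∀ p : Polynomial ℝ, p.eval x = evalRingHom x p from fun p => rfl,
      RingHom.map_det]
    congr 1
    ext i j
    by_cases h : i = j
    · subst h
      simp [Matrix.charmatrix_apply_eq, Matrix.one_apply]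
    · simp [Matrix.charmatrix_apply_ne _ _ _ h, Matrix.one_apply, h]
  rw [hdet]
  have hs3 : Real.sqrt (3 * p11 u / rho u) ^ 2 = 3 * p11 u / rho u :=
    Real.sq_sqrt (by unfold rho; positivity)
  have hs1 : Real.sqrt (p11 u / rho u) ^ 2 = p11 u / rho u :=
    Real.sq_sqrt (by unfold rho; positivity)
  have hR : (((X - C (v1 u)) ^ 2 *
      (X - C (v1 u + Real.sqrt (3 * p11 u / rho u))) *
      (X - C (v1 u - Real.sqrt (3 * p11 u / rho u))) *
      (X - C (v1 u + Real.sqrt (p11 u / rho u))) *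
      (X - C (v1 u - Real.sqrt (p11 u / rho u)))).eval x) =
      (x - v1 u) ^ 2 * ((x - v1 u) ^ 2 - 3 * p11 u / rho u) *
        ((x - v1 u) ^ 2 - p11 u / rho u) := by
    simp only [eval_mul, eval_pow, eval_sub, eval_add, eval_X, eval_C]
    set s := Real.sqrt (3 * p11 u / rho u) with hsdef
    set t := Real.sqrt (p11 u / rho u) with htdef
    rw [← hs3, ← hs1]
    ring
  rw [hR]
  have hM : x • (1 : Matrix (Fin 6) (Fin 6) ℝ) - Jmat u =
      !![x, -1, 0, 0, 0, 0;
         0, x, 0, -2, 0, 0;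
         0, 0, x, 0, -2, 0;
         -(2 * (u 1)^3 / (u 0)^3 - 3 * u 3 * u 1 / (u 0)^2),
           -(3 * u 3 / u 0 - 3 * (u 1)^2 / (u 0)^2), 0, x - 3 * u 1 / u 0, 0, 0;
         -(2 * (u 1)^2 * u 2 / (u 0)^3 - 2 * u 4 * u 1 / (u 0)^2 - u 3 * u 2 / (u 0)^2),
           -(2 * u 4 / u 0 - 2 * u 1 * u 2 / (u 0)^2), -(u 3 / u 0 - (u 1)^2 / (u 0)^2),
           -(u 2 / u 0), x - 2 * u 1 / u 0, 0;
         -(2 * u 1 * (u 2)^2 / (u 0)^3 - u 5 * u 1 / (u 0)^2 - 2 * u 4 * u 2 / (u 0)^2),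
           -(u 5 / u 0 - (u 2)^2 / (u 0)^2), -(2 * u 4 / u 0 - 2 * u 1 * u 2 / (u 0)^2),
           0, -(2 * u 2 / u 0), x - u 1 / u 0] := by
    ext i j
    fin_cases i <;> fin_cases j <;> simp only [Matrix.sub_apply, Matrix.smul_apply] <;>
      norm_num [Jmat, Matrix.one_apply, Fin.ext_iff, Fin.reduceFinMk, Fin.isValue, vec6_0, vec6_1, vec6_2, vec6_3, vec6_4, vec6_5]
  rw [hM, det6]
  unfold v1 p11 rho
  field_simp
  ring
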